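/- arXiv:2306.16889 — 2 statements merged into one kernel-verified Lean document; each statement's English description precedes it below -/
import Mathlib

section
/- ∑_{k=1}^∞ (27/20)^k / C(3k,k) = 1/4 + (13√15/48)·arctan(√15 − √12) − (5/96)·log(5/2). -/
open Real MeasureTheory intervalIntegral

lemma beta_nat (m n : ℕ) : ∫ x in (0:ℝ)..1, x^m * (1-x)^n
    = (m.factorial * n.factorial : ℝ) / ((m+n+1).factorial) := by
  have h := Complex.Gamma_mul_Gamma_eq_betaIntegral
    (s := (m+1 : ℂ)) (t := (n+1 : ℂ)) (by simp; positivity) (by simp; positivity)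
  rw [Complex.Gamma_nat_eq_factorial, Complex.Gamma_nat_eq_factorial] at h
  have h2 : ((m:ℂ)+1) + ((n:ℂ)+1) = ((m+n+1 : ℕ) : ℂ) + 1 := by push_cast; ring
  rw [h2, Complex.Gamma_nat_eq_factorial] at h
  have hb : Complex.betaIntegral (m+1) (n+1)
      = ((∫ x in (0:ℝ)..1, x^m * (1-x)^n : ℝ) : ℂ) := by
    rw [Complex.betaIntegral]
    rw [← intervalIntegral.integral_ofReal]
    apply intervalIntegral.integral_congr
    intro x hx
    have e1 : ((m:ℂ)+1) - 1 = (m : ℂ) := by ring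
    have e2 : ((n:ℂ)+1) - 1 = (n : ℂ) := by ring
    simp only [e1, e2, Complex.cpow_natCast]
    push_cast
    ring
  rw [hb] at h
  have hfac : ((m+n+1).factorial : ℂ) ≠ 0 := by exact_mod_cast (m+n+1).factorial_ne_zero
  have : ((∫ x in (0:ℝ)..1, x^m * (1-x)^n : ℝ) : ℂ)
      = ((m.factorial * n.factorial : ℝ) / ((m+n+1).factorial) : ℝ) := by
    push_cast
    rw [eq_div_iff hfac]
    linear_combination -h
  exact_mod_cast this

lemma term_eq (k : ℕ) :
    ∫ x in (0:ℝ)..1, (((k:ℝ)+1) * (27/20)^(k+1)) * (x^k * (1-x)^(2*k+2))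
    = (27/20 : ℝ)^(k+1) / (((3*(k+1)).choose (k+1) : ℕ) : ℝ) := by
  rw [intervalIntegral.integral_const_mul, beta_nat]
  have hC := Nat.choose_mul_factorial_mul_factorial (show (k+1) ≤ 3*(k+1) by omega)
  have h1 : 3*(k+1) - (k+1) = 2*k+2 := by omega
  rw [h1] at hC
  have hC' : (((3*(k+1)).choose (k+1) : ℕ) : ℝ) * (k+1).factorial * (2*k+2).factorial
      = ((3*(k+1)).factorial : ℝ) := by exact_mod_cast congrArg (Nat.cast (R := ℝ)) hC
  have hCpos : (0:ℝ) < ((3*(k+1)).choose (k+1) : ℕ) := by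
    exact_mod_cast Nat.choose_pos (show (k+1) ≤ 3*(k+1) by omega)
  have hfs : ((k+1).factorial : ℝ) = ((k:ℝ)+1) * (k.factorial : ℝ) := by
    rw [Nat.factorial_succ]; push_cast; ring
  have he : (k + (2*k+2) + 1) = 3*(k+1) := by omega
  rw [he]
  have hfacpos : (0:ℝ) < ((3*(k+1)).factorial : ℝ) := by
    exact_mod_cast (3*(k+1)).factorial_pos
  field_simp
  rw [← hC', hfs]
  ring

lemma r_bound {x : ℝ} (h0 : 0 ≤ x) (h1 : x ≤ 1) : 27 * (x*(1-x)^2) ≤ 4 := by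
  nlinarith [sq_nonneg (3*x-1), mul_nonneg (sq_nonneg (3*x-1)) (by linarith : (0:ℝ) ≤ 4-3*x)]

lemma Q_pos (x : ℝ) : 0 < 9*x^2-3*x+4 := by nlinarith [sq_nonneg (6*x-1)]

lemma sum_gg {x : ℝ} (h0 : 0 ≤ x) (h1 : x ≤ 1) :
    ∑' k : ℕ, (((k:ℝ)+1) * (27/20)^(k+1)) * (x^k * (1-x)^(2*k+2))
    = 540*(1-x)^2 / ((5-3*x)^2 * (9*x^2-3*x+4)^2) := by
  set r : ℝ := (27/20) * (x*(1-x)^2) with hr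
  have hr0 : 0 ≤ r := by positivity
  have hr1 : r ≤ 1/5 := by
    have := r_bound h0 h1
    rw [hr]; linarith
  have hrn : ‖r‖ < 1 := by rw [Real.norm_eq_abs, abs_of_nonneg hr0]; linarith
  have hs1 : HasSum (fun k : ℕ => (k:ℝ) * r^k) (r / (1-r)^2) :=
    hasSum_coe_mul_geometric_of_norm_lt_one hrn
  have hs2 : HasSum (fun k : ℕ => r^k) ((1-r)⁻¹) := hasSum_geometric_of_norm_lt_one hrn
  have hne : (1:ℝ) - r ≠ 0 := by linarith
  have hs3 : HasSum (fun k : ℕ => ((k:ℝ)+1) * r^k) (1 / (1-r)^2) := by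
    have h := hs1.add hs2
    have hval : r / (1-r)^2 + (1-r)⁻¹ = 1 / (1-r)^2 := by
      field_simp
      ring
    rw [hval] at h
    exact h.congr_fun (fun k => by ring)
  have hs4 : HasSum (fun k : ℕ => ((27/20)*(1-x)^2) * (((k:ℝ)+1) * r^k))
      (((27/20)*(1-x)^2) * (1 / (1-r)^2)) := hs3.mul_left _
  have hterm : ∀ k : ℕ, (((k:ℝ)+1) * (27/20)^(k+1)) * (x^k * (1-x)^(2*k+2))
      = ((27/20)*(1-x)^2) * (((k:ℝ)+1) * r^k) := by
    intro k
    have e : (1-x)^(2*k+2) = ((1-x)^2)^k * (1-x)^2 := by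
      rw [← pow_mul, ← pow_add]
    rw [e, hr, mul_pow, mul_pow, pow_succ]
    ring
  rw [tsum_congr hterm, hs4.tsum_eq]
  have h20 : (1:ℝ) - r = (5-3*x)*(9*x^2-3*x+4)/20 := by rw [hr]; ring
  have hL : (5:ℝ)-3*x ≠ 0 := by linarith
  have hQ : (9*x^2-3*x+4 : ℝ) ≠ 0 := ne_of_gt (Q_pos x)
  rw [h20]
  field_simp
  ring


lemma swap_lemma :
    ∑' k : ℕ, (27/20:ℝ)^(k+1) / (((3*(k+1)).choose (k+1) : ℕ) : ℝ)
    = ∫ x in (0:ℝ)..1, 540*(1-x)^2 / ((5-3*x)^2 * (9*x^2-3*x+4)^2) := by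
  set μ := volume.restrict (Set.Ioc (0:ℝ) 1) with hμ
  set F : ℕ → ℝ → ℝ := fun k x => (((k:ℝ)+1) * (27/20)^(k+1)) * (x^k * (1-x)^(2*k+2)) with hF
  have hcont : ∀ k, Continuous (F k) := by
    intro k; rw [hF]; fun_prop
  have hF_int : ∀ k, Integrable (F k) μ := fun k => (hcont k).integrableOn_Ioc
  have hbound : ∀ k, ∀ x ∈ Set.Ioc (0:ℝ) 1, ‖F k x‖ ≤ ((k:ℝ)+1)*(27/20)^(k+1)*(4/27)^k := by
    intro k x hx
    obtain ⟨hx0, hx1⟩ := hx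
    have hx0' : (0:ℝ) ≤ x := le_of_lt hx0
    have h1x : (0:ℝ) ≤ 1 - x := by linarith
    have e : x^k * (1-x)^(2*k+2) = (x*(1-x)^2)^k * (1-x)^2 := by
      rw [mul_pow, ← pow_mul, pow_add]
      ring
    rw [hF, Real.norm_eq_abs]
    have hnn : (0:ℝ) ≤ (((k:ℝ)+1) * (27/20)^(k+1)) * (x^k * (1-x)^(2*k+2)) := by positivity
    rw [abs_of_nonneg hnn, e]
    have hb1 : (x*(1-x)^2)^k ≤ (4/27:ℝ)^k := by
      apply pow_le_pow_left₀ (by positivity)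
      have := r_bound hx0' hx1
      linarith
    have hb2 : (1-x)^2 ≤ 1 := by nlinarith
    calc (((k:ℝ)+1) * (27/20)^(k+1)) * ((x*(1-x)^2)^k * (1-x)^2)
        ≤ (((k:ℝ)+1) * (27/20)^(k+1)) * ((4/27:ℝ)^k * 1) := by
          apply mul_le_mul_of_nonneg_left _ (by positivity)
          exact mul_le_mul hb1 hb2 (by positivity) (by positivity)
      _ = ((k:ℝ)+1)*(27/20)^(k+1)*(4/27)^k := by ring
  have hsumB : Summable (fun k : ℕ => ((k:ℝ)+1)*(27/20)^(k+1)*(4/27)^k) := by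
    have h5 : ‖(1/5 : ℝ)‖ < 1 := by
      rw [Real.norm_eq_abs, abs_of_pos (by norm_num : (0:ℝ) < 1/5)]; norm_num
    have h1 : Summable (fun k : ℕ => (k:ℝ) * (1/5)^k) := by
      have := summable_pow_mul_geometric_of_norm_lt_one (R := ℝ) 1 h5
      simpa using this
    have h2 : Summable (fun k : ℕ => (1/5 : ℝ)^k) := summable_geometric_of_lt_one (by norm_num) (by norm_num)
    have h3 : Summable (fun k : ℕ => ((k:ℝ)+1) * (1/5)^k) := by
      have := h1.add h2
      apply this.congr
      intro k; ring
    have := h3.mul_left (27/20 : ℝ)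
    apply this.congr
    intro k
    have hm : ((27:ℝ)/20)^k * (4/27)^k = (1/5)^k := by rw [← mul_pow]; norm_num
    calc (27/20 : ℝ)*(((k:ℝ)+1)*(1/5)^k)
        = ((k:ℝ)+1)*(27/20)*((27/20)^k*(4/27)^k) := by rw [hm]; ring
      _ = ((k:ℝ)+1)*(27/20)^(k+1)*(4/27)^k := by rw [pow_succ]; ring
  have hF_sum : Summable (fun k => ∫ a, ‖F k a‖ ∂μ) := by
    apply Summable.of_nonneg_of_le (fun k => integral_nonneg (fun a => norm_nonneg _)) _ hsumB
    intro k
    have : ∫ a, ‖F k a‖ ∂μ ≤ ∫ _ in Set.Ioc (0:ℝ) 1, ((k:ℝ)+1)*(27/20)^(k+1)*(4/27)^k := by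
      rw [hμ]
      apply setIntegral_mono_on (hF_int k).norm (integrableOn_const (by simp))
        measurableSet_Ioc (hbound k)
    simpa using this
  have key := MeasureTheory.hasSum_integral_of_summable_integral_norm hF_int hF_sum
  have h01 : (0:ℝ) ≤ 1 := by norm_num
  have hterm : (fun k => ∫ a, F k a ∂μ) = fun k => (27/20:ℝ)^(k+1) / (((3*(k+1)).choose (k+1) : ℕ) : ℝ) := by
    funext k
    rw [hμ, ← intervalIntegral.integral_of_le h01, hF]
    exact term_eq k
  rw [hterm] at key
  have hrhs : (∫ a, (∑' k, F k a) ∂μ) = ∫ x in (0:ℝ)..1, 540*(1-x)^2 / ((5-3*x)^2 * (9*x^2-3*x+4)^2) := by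
    rw [hμ, intervalIntegral.integral_of_le h01]
    apply setIntegral_congr_fun measurableSet_Ioc
    intro x hx
    exact sum_gg (le_of_lt hx.1) hx.2
  rw [hrhs] at key
  exact key.tsum_eq



noncomputable def FF (x : ℝ) : ℝ :=
  (5/144) * Real.log (5-3*x) - (5/288) * Real.log (9*x^2-3*x+4)
  + (13*Real.sqrt 15/144) * Real.arctan ((6*x-1)/Real.sqrt 15)
  + (1/36)*(5/(5-3*x) + (105*x+20)/(9*x^2-3*x+4))

lemma s15_pos : (0:ℝ) < Real.sqrt 15 := Real.sqrt_pos.mpr (by norm_num)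
lemma s15_sq : (Real.sqrt 15)^2 = 15 := Real.sq_sqrt (by norm_num)

lemma FF_deriv {x : ℝ} (hx : x ≤ 1) :
    HasDerivAt FF (540*(1-x)^2 / ((5-3*x)^2 * (9*x^2-3*x+4)^2)) x := by
  have hL : (5:ℝ)-3*x ≠ 0 := by intro h; nlinarith
  have hLpos : (0:ℝ) < 5-3*x := by linarith
  have hQ : (9*x^2-3*x+4 : ℝ) ≠ 0 := ne_of_gt (Q_pos x)
  have hs := s15_pos
  have hs' : Real.sqrt 15 ≠ 0 := ne_of_gt hs
  -- inner derivatives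
  have d1 : HasDerivAt (fun x : ℝ => 5-3*x) (-3) x := by
    exact ((hasDerivAt_const x (5:ℝ)).sub ((hasDerivAt_id x).const_mul (3:ℝ))).congr_deriv (by ring)
  have d2 : HasDerivAt (fun x : ℝ => 9*x^2-3*x+4) (18*x-3) x := by
    have h := (((hasDerivAt_pow 2 x).const_mul (9:ℝ)).sub ((hasDerivAt_id x).const_mul (3:ℝ))).add_const (4:ℝ)
    simpa using h.congr_deriv (by ring)
  have d3 : HasDerivAt (fun x : ℝ => (6*x-1)/Real.sqrt 15) (6/Real.sqrt 15) x := by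
    have h := (((hasDerivAt_id x).const_mul (6:ℝ)).sub_const (1:ℝ)).div_const (Real.sqrt 15)
    simpa using h
  -- pieces
  have p1 : HasDerivAt (fun x : ℝ => (5/144) * Real.log (5-3*x)) ((5/144) * (-3/(5-3*x))) x :=
    (d1.log hL).const_mul _
  have p2 : HasDerivAt (fun x : ℝ => (5/288) * Real.log (9*x^2-3*x+4)) ((5/288) * ((18*x-3)/(9*x^2-3*x+4))) x :=
    (d2.log hQ).const_mul _
  have p3 : HasDerivAt (fun x : ℝ => (13*Real.sqrt 15/144) * Real.arctan ((6*x-1)/Real.sqrt 15))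
      ((13*Real.sqrt 15/144) * ((1/(1+((6*x-1)/Real.sqrt 15)^2)) * (6/Real.sqrt 15))) x := by
    have ha := (Real.hasDerivAt_arctan ((6*x-1)/Real.sqrt 15)).comp x d3
    exact ha.const_mul _
  have h15 : (Real.sqrt 15)^2 = 15 := s15_sq
  have hden : 1+((6*x-1)/Real.sqrt 15)^2 = (36*x^2-12*x+16)/15 := by
    rw [div_pow, h15]
    field_simp
    ring
  have p3' : HasDerivAt (fun x : ℝ => (13*Real.sqrt 15/144) * Real.arctan ((6*x-1)/Real.sqrt 15))
      (65/(32*(9*x^2-3*x+4))) x := by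
    convert p3 using 1
    rw [hden]
    have hQ4 : (36*x^2-12*x+16 : ℝ) ≠ 0 := by have := Q_pos x; intro h; nlinarith
    field_simp
    rw [div_eq_div_iff (ne_of_gt (by nlinarith [Q_pos x])) (ne_of_gt (by nlinarith [Q_pos x]))]
    ring

  have p4 : HasDerivAt (fun x : ℝ => 5/(5-3*x)) (-(5*(-3))/(5-3*x)^2) x := by
    have h := ((hasDerivAt_const x (5:ℝ)).div d1 hL)
    exact h.congr_deriv (by ring)
  have p5 : HasDerivAt (fun x : ℝ => (105*x+20)/(9*x^2-3*x+4))
      ((105*(9*x^2-3*x+4) - (105*x+20)*(18*x-3))/(9*x^2-3*x+4)^2) x := by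
    have dnum : HasDerivAt (fun x : ℝ => 105*x+20) 105 x := by
      simpa using ((hasDerivAt_id x).const_mul (105:ℝ)).add_const (20:ℝ)
    exact dnum.div d2 hQ
  have ptot := ((p1.sub p2).add p3').add (((p4.add p5)).const_mul (1/36 : ℝ))
  have hFF : FF = fun x => ((5/144) * Real.log (5-3*x) - (5/288) * Real.log (9*x^2-3*x+4)
      + (13*Real.sqrt 15/144) * Real.arctan ((6*x-1)/Real.sqrt 15))
      + (1/36)*(5/(5-3*x) + (105*x+20)/(9*x^2-3*x+4)) := by
    funext y; rfl
  rw [hFF]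
  have key : (540 * (1 - x) ^ 2 / ((5 - 3 * x) ^ 2 * (9 * x ^ 2 - 3 * x + 4) ^ 2) =
      5 / 144 * (-3 / (5 - 3 * x)) - 5 / 288 * ((18 * x - 3) / (9 * x ^ 2 - 3 * x + 4)) +
        65 / (32 * (9 * x ^ 2 - 3 * x + 4)) +
      1 / 36 *
        (-(5 * -3) / (5 - 3 * x) ^ 2 +
          (105 * (9 * x ^ 2 - 3 * x + 4) - (105 * x + 20) * (18 * x - 3)) / (9 * x ^ 2 - 3 * x + 4) ^ 2) : Prop) := by
    clear ptot p1 p2 p3 p3' p4 p5 hFF d1 d2 d3 hden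
    set a := (5:ℝ)-3*x with ha
    set q := (9*x^2-3*x+4 : ℝ) with hq
    field_simp
    rw [ha, hq]
    ring
  exact ptot.congr_deriv key.symm

lemma sqrt3_pos : (0:ℝ) < Real.sqrt 3 := Real.sqrt_pos.mpr (by norm_num)
lemma sqrt5_pos : (0:ℝ) < Real.sqrt 5 := Real.sqrt_pos.mpr (by norm_num)

lemma arctan3 : Real.arctan (5/Real.sqrt 15) + Real.arctan (1/Real.sqrt 15)
    = 3 * Real.arctan (Real.sqrt 15 - Real.sqrt 12) := by
  have ha := sqrt3_pos
  have hb := sqrt5_pos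
  set a := Real.sqrt 3 with hadef
  set b := Real.sqrt 5 with hbdef
  have ha2 : a^2 = 3 := Real.sq_sqrt (by norm_num)
  have hb2 : b^2 = 5 := Real.sq_sqrt (by norm_num)
  have h15 : Real.sqrt 15 = a*b := by
    rw [show (15:ℝ) = 3*5 by norm_num, Real.sqrt_mul (by norm_num)]
  have h12 : Real.sqrt 12 = 2*a := by
    rw [show (12:ℝ) = 4*3 by norm_num, Real.sqrt_mul (by norm_num),
      show Real.sqrt 4 = 2 by rw [show (4:ℝ) = 2^2 by norm_num, Real.sqrt_sq (by norm_num)]]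
  have hbl : 20/9 < b := by
    rw [hbdef, show (20:ℝ)/9 = Real.sqrt ((20/9)^2) by rw [Real.sqrt_sq (by norm_num)]]
    apply Real.sqrt_lt_sqrt (by positivity)
    norm_num
  have hbu : b < 23/10 := by
    rw [hbdef, show (23:ℝ)/10 = Real.sqrt ((23/10)^2) by rw [Real.sqrt_sq (by norm_num)]]
    apply Real.sqrt_lt_sqrt (by norm_num)
    norm_num
  have ht : Real.sqrt 15 - Real.sqrt 12 = a*(b-2) := by rw [h15, h12]; ring
  set t := a*(b-2) with htdef
  have ht0 : 0 < t := by apply mul_pos ha; linarith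
  have ht2e : t^2 = 3*(b-2)^2 := by rw [htdef, mul_pow, ha2]
  have ht2 : t^2 < 1/3 := by rw [ht2e]; nlinarith
  have h1t : (0:ℝ) < 1 - t^2 := by nlinarith
  have hs15 : Real.sqrt 15 ≠ 0 := by rw [h15]; positivity
  -- step A
  have hA : Real.arctan (5/Real.sqrt 15) + Real.arctan (1/Real.sqrt 15)
      = Real.arctan (9/Real.sqrt 15) := by
    have h13 : (5/Real.sqrt 15) * (1/Real.sqrt 15) = 1/3 := by
      rw [div_mul_div_comm, Real.mul_self_sqrt (by norm_num : (0:ℝ) ≤ 15)]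
      norm_num
    rw [Real.arctan_add (by rw [h13]; norm_num)]
    congr 1
    rw [h13, ← add_div, show (5:ℝ)+1 = 6 by norm_num, show (1:ℝ)-1/3 = 2/3 by norm_num]
    rw [div_div_eq_mul_div, div_mul_eq_mul_div, div_div]
    rw [show (6:ℝ)*3 = 2*9 by norm_num, mul_comm (Real.sqrt 15) 2, mul_div_mul_left _ _ (by norm_num : (2:ℝ) ≠ 0)]
  -- step B
  have hB : Real.arctan t + Real.arctan t = Real.arctan (2*t/(1-t^2)) := by
    rw [Real.arctan_add (by nlinarith : t*t < 1)]
    congr 1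
    have : t*t = t^2 := sq t ▸ rfl
    rw [show t*t = t^2 from (sq t).symm]
    ring
  -- step C
  have hcondC : (2*t/(1-t^2)) * t < 1 := by
    rw [show (2*t/(1-t^2)) * t = 2*t^2/(1-t^2) by ring, div_lt_one h1t]
    nlinarith
  have h1t' : (1:ℝ) - t^2 ≠ 0 := ne_of_gt h1t
  have h3t : (0:ℝ) < 1 - 3*t^2 := by nlinarith
  have hC : Real.arctan (2*t/(1-t^2)) + Real.arctan t = Real.arctan (9/Real.sqrt 15) := by
    rw [Real.arctan_add hcondC]
    congr 1
    rw [h15]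
    have e1 : 2*t/(1-t^2) + t = (3*t-t^3)/(1-t^2) := by field_simp; ring
    have e2 : 1 - 2*t/(1-t^2)*t = (1-3*t^2)/(1-t^2) := by field_simp; ring
    rw [e1, e2, div_div_div_cancel_right₀]
    · have hab : (0:ℝ) < a*b := by positivity
      rw [div_eq_div_iff (ne_of_gt h3t) (ne_of_gt hab), htdef]
      linear_combination (a^2*(-b^4+6*b^3-12*b^2+8*b) + (-3*b^4+18*b^3-6*b^2-90*b+108)) * ha2 + (-9*b^2+54*b-63) * hb2
    · exact h1t'
  rw [hA, ht, ← hC, ← hB]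
  ring


theorem stmt_17 :
    ∑' k : ℕ, (27/20 : ℝ)^(k+1) / ((((3*(k+1)).choose (k+1) : ℕ)) : ℝ) =
    1/4 + (13*Real.sqrt 15/48)*Real.arctan (Real.sqrt 15 - Real.sqrt 12) - (5/96)*Real.log (5/2) := by
  rw [swap_lemma]
  have hFTC : ∫ x in (0:ℝ)..1, 540*(1-x)^2 / ((5-3*x)^2 * (9*x^2-3*x+4)^2) = FF 1 - FF 0 := by
    apply intervalIntegral.integral_eq_sub_of_hasDerivAt
    · intro x hx
      rw [Set.uIcc_of_le (by norm_num : (0:ℝ) ≤ 1)] at hx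
      exact FF_deriv hx.2
    · apply ContinuousOn.intervalIntegrable
      apply ContinuousOn.div
      · fun_prop
      · fun_prop
      · intro x hx
        rw [Set.uIcc_of_le (by norm_num : (0:ℝ) ≤ 1)] at hx
        have h1 : (0:ℝ) < 5-3*x := by have := hx.2; linarith
        have h2 := Q_pos x
        positivity
  rw [hFTC]
  have e1 : FF 1 = (5/144)*Real.log 2 - (5/288)*Real.log 10
      + (13*Real.sqrt 15/144)*Real.arctan (5/Real.sqrt 15) + 5/12 := by
    rw [FF]; norm_num
  have e0 : FF 0 = (5/144)*Real.log 5 - (5/288)*Real.log 4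
      + (13*Real.sqrt 15/144)*Real.arctan ((-1)/Real.sqrt 15) + 1/6 := by
    rw [FF]; norm_num
  have hlog10 : Real.log 10 = Real.log 2 + Real.log 5 := by
    rw [show (10:ℝ) = 2*5 by norm_num, Real.log_mul (by norm_num) (by norm_num)]
  have hlog4 : Real.log 4 = 2*Real.log 2 := by
    rw [show (4:ℝ) = 2^2 by norm_num, Real.log_pow]
    push_cast; ring
  have hlog52 : Real.log (5/2) = Real.log 5 - Real.log 2 := Real.log_div (by norm_num) (by norm_num)
  rw [e1, e0, hlog10, hlog4, hlog52, show ((-1):ℝ)/Real.sqrt 15 = -(1/Real.sqrt 15) by ring, Real.arctan_neg]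
  linear_combination (13*Real.sqrt 15/144) * arctan3
end

section
/- ∑_{k=1}^∞ (−27/16)^k / C(3k,k) = −1/5 + (√15/75)·arctan((4√3 − √15)/11) − (1/6)·log 4. -/
open Real intervalIntegral MeasureTheory

lemma beta_nat_s18 (b a : ℕ) : ∫ t in (0:ℝ)..1, t^a*(1-t)^b
    = (a.factorial * b.factorial : ℝ) / (a+b+1).factorial := by
  induction b generalizing a with
  | zero =>
    have : ((a:ℝ)+1) ≠ 0 := by positivity
    rw [Nat.factorial_succ]
    push_cast
    simp [integral_pow]
    rw [eq_div_iff (by positivity)]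
    field_simp
  | succ b ih =>
    have hane : ((a:ℝ)+1) ≠ 0 := by positivity
    have hparts := intervalIntegral.integral_mul_deriv_eq_deriv_mul
      (u := fun t : ℝ => (1-t)^(b+1)) (u' := fun t : ℝ => -((b+1) * (1-t)^b))
      (v := fun t : ℝ => t^(a+1)/(a+1)) (v' := fun t : ℝ => t^a)
      (a := (0:ℝ)) (b := 1)
      (fun t _ => by
        have h1 : HasDerivAt (fun t : ℝ => (1-t)) (-1) t := by
          simpa using (hasDerivAt_id t).const_sub 1
        simpa [mul_comm, mul_assoc] using (h1.fun_pow (b+1))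
      )
      (fun t _ => by
        have := (hasDerivAt_pow (a+1) t).div_const ((a:ℝ)+1)
        have h2 : ((a:ℝ)+1) * t^a / ((a:ℝ)+1) = t^a := by field_simp
        simpa [Nat.cast_add, Nat.cast_one, h2] using this
      )
      (Continuous.intervalIntegrable (by continuity) _ _)
      (Continuous.intervalIntegrable (by continuity) _ _)
    -- hparts : ∫ (1-t)^(b+1) * t^a = ... - ∫ (-((b+1)(1-t)^b)) * (t^(a+1)/(a+1))
    have e1 : (∫ t in (0:ℝ)..1, t^a*(1-t)^(b+1))
        = ((b:ℝ)+1)/((a:ℝ)+1) * ∫ t in (0:ℝ)..1, t^(a+1)*(1-t)^b := by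
      rw [show (fun t : ℝ => t^a*(1-t)^(b+1)) = fun t : ℝ => (1-t)^(b+1) * t^a from by
        funext t; ring] at *
      rw [hparts]
      rw [← intervalIntegral.integral_const_mul]
      simp only [one_pow, sub_self, zero_pow, Nat.succ_ne_zero, ne_eq, not_false_iff,
        zero_mul, mul_zero, zero_div, sub_zero, zero_sub, ← intervalIntegral.integral_neg]
      congr 1
      funext t
      field_simp
    rw [e1, ih (a+1)]
    have h3 : ((a+1)+b+1) = (a + (b+1) + 1) := by ring
    rw [h3]
    rw [Nat.factorial_succ (a), Nat.factorial_succ b]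
    push_cast
    field_simp
lemma arctan_id : Real.arctan (7/Real.sqrt 15) - Real.arctan (1/Real.sqrt 15)
    = 3 * Real.arctan ((4*Real.sqrt 3 - Real.sqrt 15)/11) := by
  have h3 : Real.sqrt 3 ^ 2 = 3 := Real.sq_sqrt (by norm_num)
  have h5 : Real.sqrt 5 ^ 2 = 5 := Real.sq_sqrt (by norm_num)
  have h3p : (0:ℝ) < Real.sqrt 3 := Real.sqrt_pos.mpr (by norm_num)
  have h5p : (0:ℝ) < Real.sqrt 5 := Real.sqrt_pos.mpr (by norm_num)
  have h15eq : Real.sqrt 15 = Real.sqrt 3 * Real.sqrt 5 := by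
    rw [show (15:ℝ) = 3*5 by norm_num, Real.sqrt_mul (by norm_num)]
  set s3 := Real.sqrt 3 with hs3
  set s5 := Real.sqrt 5 with hs5
  rw [h15eq]
  have h5lb : (13:ℝ)/6 < s5 := by nlinarith
  have h5ub : s5 < 9/4 := by nlinarith
  have h3b : s3 < 2 := by nlinarith
  have h3lb : (3:ℝ)/2 < s3 := by nlinarith
  have hw : s3*s5 ≠ 0 := by positivity
  -- step 1
  have k1 : ((4*s3-s3*s5)/11) * ((4*s3-s3*s5)/11) < 1 := by
    rw [div_mul_div_comm, div_lt_one (by norm_num)]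
    nlinarith
  have hne1 : (1:ℝ) - (4*s3-s3*s5)/11 * ((4*s3-s3*s5)/11) ≠ 0 := by linarith
  have e1 : ((4*s3-s3*s5)/11 + (4*s3-s3*s5)/11)/(1 - (4*s3-s3*s5)/11*((4*s3-s3*s5)/11))
      = 16*s3 - 7*s3*s5 := by
    rw [div_eq_iff hne1]
    field_simp
    linear_combination ((16-7*s5)*(4-s5)^2)*h3 + (216 - 21*s5)*h5
  have step1 : Real.arctan ((4*s3-s3*s5)/11) + Real.arctan ((4*s3-s3*s5)/11)
      = Real.arctan (16*s3 - 7*s3*s5) := by rw [Real.arctan_add k1, e1]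
  -- step 2
  have k2 : (16*s3-7*s3*s5) * ((4*s3-s3*s5)/11) < 1 := by
    rw [mul_div_assoc', div_lt_one (by norm_num)]
    nlinarith
  have hne2 : (1:ℝ) - (16*s3-7*s3*s5)*((4*s3-s3*s5)/11) ≠ 0 := by linarith
  have e2 : ((16*s3 - 7*s3*s5) + (4*s3-s3*s5)/11)/(1 - (16*s3-7*s3*s5)*((4*s3-s3*s5)/11))
      = 3*(s3*s5)/11 := by
    rw [div_eq_div_iff hne2 (by norm_num)]
    field_simp
    linear_combination (3*s5*(16-7*s5)*(4-s5))*h3 + (63*s5 - 396)*h5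
  have step2 : Real.arctan (16*s3-7*s3*s5) + Real.arctan ((4*s3-s3*s5)/11)
      = Real.arctan (3*(s3*s5)/11) := by rw [Real.arctan_add k2, e2]
  -- step 3
  have k3 : (3*(s3*s5)/11) * (1/(s3*s5)) < 1 := by
    rw [div_mul_div_comm, div_lt_one (by positivity)]
    nlinarith
  have hne3 : (1:ℝ) - (3*(s3*s5)/11)*(1/(s3*s5)) ≠ 0 := by linarith
  have e3 : ((3*(s3*s5)/11) + 1/(s3*s5))/(1 - (3*(s3*s5)/11)*(1/(s3*s5))) = 7/(s3*s5) := by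
    rw [div_eq_div_iff hne3 hw]
    field_simp
    linear_combination (3*s5^2)*h3 + 9*h5
  have step3 : Real.arctan (3*(s3*s5)/11) + Real.arctan (1/(s3*s5))
      = Real.arctan (7/(s3*s5)) := by rw [Real.arctan_add k3, e3]
  linarith [step1, step2, step3]
noncomputable def Fa (t : ℝ) : ℝ :=
  -t - (1/9)*Real.log (3*t+1) + (1/18)*Real.log (9*t^2-21*t+16)
  - (4/9)/(3*t+1) + (132*t-64)/(45*(9*t^2-21*t+16))
  + (Real.sqrt 15/225)*Real.arctan ((6*t-7)/Real.sqrt 15)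

noncomputable def Gg (t : ℝ) : ℝ :=
  -1 - 32/(27*t^3-54*t^2+27*t+16) + 768/(27*t^3-54*t^2+27*t+16)^2

lemma hasDeriv_Fa {t : ℝ} (ht : 0 ≤ t) : HasDerivAt Fa (Gg t) t := by
  have hs2 : Real.sqrt 15 ^ 2 = 15 := Real.sq_sqrt (by norm_num)
  have hsp : (0:ℝ) < Real.sqrt 15 := Real.sqrt_pos.mpr (by norm_num)
  set s := Real.sqrt 15 with hs
  have hsne : s ≠ 0 := ne_of_gt hsp
  have hq : 0 < 9*t^2-21*t+16 := by nlinarith [sq_nonneg (6*t-7)]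
  have hqne : (9*t^2-21*t+16) ≠ 0 := ne_of_gt hq
  have hl : (0:ℝ) < 3*t+1 := by linarith
  have hlne : (3*t+1) ≠ 0 := ne_of_gt hl
  have hD : 0 < 27*t^3-54*t^2+27*t+16 := by nlinarith [mul_pos hl hq]
  have hDne : (27*t^3-54*t^2+27*t+16) ≠ 0 := ne_of_gt hD
  have hlin : HasDerivAt (fun t : ℝ => 3*t+1) 3 t := by
    simpa using ((hasDerivAt_id t).const_mul 3).add_const 1
  have hquad : HasDerivAt (fun t : ℝ => 9*t^2-21*t+16) (18*t-21) t := by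
    have h1 : HasDerivAt (fun t : ℝ => t^2) (2*t) t := by simpa using hasDerivAt_pow 2 t
    have := ((h1.const_mul 9).sub ((hasDerivAt_id t).const_mul 21)).add_const 16
    exact this.congr_deriv (by ring)
  have d1 : HasDerivAt (fun t : ℝ => -t) (-1) t := (hasDerivAt_id t).neg
  have d2 : HasDerivAt (fun t : ℝ => (1/9)*Real.log (3*t+1)) ((1/9)*(3/(3*t+1))) t :=
    (hlin.log hlne).const_mul (1/9)
  have d3 : HasDerivAt (fun t : ℝ => (1/18)*Real.log (9*t^2-21*t+16))
      ((1/18)*((18*t-21)/(9*t^2-21*t+16))) t := (hquad.log hqne).const_mul (1/18)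
  have d4 : HasDerivAt (fun t : ℝ => (4/9)/(3*t+1)) ((4/9)*(-(3)/(3*t+1)^2)) t := by
    have := (hlin.inv hlne).const_mul (4/9)
    simpa [div_eq_mul_inv] using this
  have d5 : HasDerivAt (fun t : ℝ => (132*t-64)/(45*(9*t^2-21*t+16)))
      ((132*(45*(9*t^2-21*t+16)) - (132*t-64)*(45*(18*t-21)))/(45*(9*t^2-21*t+16))^2) t := by
    have hnum : HasDerivAt (fun t : ℝ => 132*t-64) 132 t := by
      simpa using ((hasDerivAt_id t).const_mul 132).sub_const 64
    have hden : HasDerivAt (fun t : ℝ => 45*(9*t^2-21*t+16)) (45*(18*t-21)) t :=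
      hquad.const_mul 45
    exact hnum.div hden (by positivity)
  have d6 : HasDerivAt (fun t : ℝ => (s/225)*Real.arctan ((6*t-7)/s))
      ((s/225)*((6/s)/(1 + ((6*t-7)/s)^2))) t := by
    have hin : HasDerivAt (fun t : ℝ => (6*t-7)/s) (6/s) t := by
      have := (((hasDerivAt_id t).const_mul 6).sub_const 7).div_const s
      simpa using this
    have := hin.arctan.const_mul (s/225)
    exact this.congr_deriv (by ring)
  have total := ((((d1.fun_sub d2).fun_add d3).fun_sub d4).fun_add d5).fun_add d6
  have harc : (s/225)*((6/s)/(1 + ((6*t-7)/s)^2)) = 1/(10*(9*t^2-21*t+16)) := by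
    have h1 : 1 + ((6*t-7)/s)^2 = (36*t^2-84*t+64)/15 := by
      rw [div_pow, hs2]; field_simp; ring
    have h4q : (0:ℝ) < 36*t^2-84*t+64 := by nlinarith [sq_nonneg (6*t-7)]
    rw [h1, div_div, div_mul_div_comm,
      show (225:ℝ)*(s*((36*t^2-84*t+64)/15)) = s*(15*(36*t^2-84*t+64)) from by ring,
      mul_div_mul_left _ _ hsne,
      div_eq_div_iff (by nlinarith [h4q]) (by nlinarith [hq])]
    ring
  rw [harc] at total
  refine total.congr_deriv (Eq.symm ?_)
  show Gg t = _
  unfold Gg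
  rw [show 27*t^3-54*t^2+27*t+16 = (3*t+1)*(9*t^2-21*t+16) by ring]
  have hq2 : t*(t*9-21)+16 ≠ 0 := by intro h; apply hqne; linear_combination h
  field_simp
  ring
lemma sum34 {u : ℝ} (h : |u| < 1) :
    HasSum (fun n : ℕ => (3*(n:ℝ)+4) * u^(n+1)) (u*(4-u)/(1-u)^2) := by
  have h' : ‖u‖ < 1 := by rwa [Real.norm_eq_abs]
  have hne : (1:ℝ) - u ≠ 0 := by
    intro hh
    rw [sub_eq_zero] at hh
    rw [← hh] at h
    simp at h
  have A := (hasSum_coe_mul_geometric_of_norm_lt_one h').mul_left (3*u)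
  have B := (hasSum_geometric_of_norm_lt_one h').mul_left (4*u)
  have C := A.add B
  convert C using 1
  · rfl
  · funext n; push_cast; ring
  · field_simp; ring

lemma term_int (n : ℕ) :
    (∫ t in (0:ℝ)..1, (3*(n:ℝ)+4) * (-(27/16):ℝ)^(n+1) * (t^(n+1)*(1-t)^(2*n+2)))
    = (-(27/16):ℝ)^(n+1) / (((3*(n+1)).choose (n+1) : ℕ) : ℝ) := by
  rw [intervalIntegral.integral_const_mul, beta_nat_s18]
  have hkey : ((3*(n+1)).choose (n+1)) * (n+1).factorial * (2*n+2).factorial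
      = (3*n+3).factorial := by
    have := Nat.choose_mul_factorial_mul_factorial (show n+1 ≤ 3*(n+1) by omega)
    rw [show 3*(n+1) - (n+1) = 2*n+2 by omega] at this
    rw [show 3*(n+1) = 3*n+3 by omega] 
    exact this
  have hC : (0:ℝ) < (((3*(n+1)).choose (n+1) : ℕ) : ℝ) := by
    exact_mod_cast Nat.choose_pos (show n+1 ≤ 3*(n+1) by omega)
  have hfac : ((n+1) + (2*n+2) + 1) = 3*n+4 := by omega
  rw [hfac]
  have hfac4 : ((3*n+4).factorial : ℝ) = (3*(n:ℝ)+4) * ((3*n+3).factorial : ℝ) := by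
    rw [show 3*n+4 = (3*n+3)+1 by omega, Nat.factorial_succ]
    push_cast; ring
  have hkeyR : (((3*(n+1)).choose (n+1) : ℕ) : ℝ) * ((n+1).factorial : ℝ) * ((2*n+2).factorial : ℝ)
      = ((3*n+3).factorial : ℝ) := by exact_mod_cast congrArg (Nat.cast : ℕ → ℝ) hkey
  have hf1 : (0:ℝ) < ((n+1).factorial : ℝ) := by exact_mod_cast (n+1).factorial_pos
  have hf2 : (0:ℝ) < ((2*n+2).factorial : ℝ) := by exact_mod_cast (2*n+2).factorial_pos
  have hf3 : (0:ℝ) < ((3*n+3).factorial : ℝ) := by exact_mod_cast (3*n+3).factorial_pos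
  rw [hfac4]
  set y := (-(27/16):ℝ)^(n+1) with hy
  field_simp
  linear_combination y * hkeyR

lemma GgContOn : ContinuousOn Gg (Set.Icc (0:ℝ) 1) := by
  unfold Gg
  have hD : ∀ t ∈ Set.Icc (0:ℝ) 1, (27*t^3-54*t^2+27*t+16) ≠ 0 := by
    intro t ht
    have hq : 0 < 9*t^2-21*t+16 := by nlinarith [sq_nonneg (6*t-7)]
    have hl : (0:ℝ) < 3*t+1 := by have := ht.1; linarith
    nlinarith [mul_pos hl hq]
  apply ContinuousOn.add
  · apply ContinuousOn.sub continuousOn_const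
    exact ContinuousOn.div continuousOn_const (by fun_prop) hD
  · apply ContinuousOn.div continuousOn_const (by fun_prop)
    intro t ht
    exact pow_ne_zero 2 (hD t ht)

lemma eval_Fa : Fa 1 - Fa 0 = -(1/5) + (Real.sqrt 15/75)*Real.arctan ((4*Real.sqrt 3 - Real.sqrt 15)/11) - (1/6)*Real.log 4 := by
  have hs : Real.sqrt 15 ≠ 0 := ne_of_gt (Real.sqrt_pos.mpr (by norm_num))
  unfold Fa
  norm_num
  rw [neg_div, neg_div, Real.arctan_neg, Real.arctan_neg,
    show ((16:ℝ)) = 4^2 by norm_num, Real.log_pow]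
  push_cast
  linear_combination (Real.sqrt 15/225) * arctan_id

theorem stmt_18 :
    ∑' k : ℕ, (-(27/16) : ℝ)^(k+1) / ((((3*(k+1)).choose (k+1) : ℕ)) : ℝ) =
    -(1/5) + (Real.sqrt 15/75)*Real.arctan ((4*Real.sqrt 3 - Real.sqrt 15)/11) - (1/6)*Real.log 4 := by
  classical
  set f : ℕ → ℝ → ℝ := fun n t => (3*(n:ℝ)+4) * (-(27/16):ℝ)^(n+1) * (t^(n+1)*(1-t)^(2*n+2)) with hf
  set μ : Measure ℝ := volume.restrict (Set.Ioc (0:ℝ) 1) with hμ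
  have hcont : ∀ n, Continuous (f n) := by intro n; rw [hf]; fun_prop
  have hint : ∀ n, Integrable (f n) μ := fun n => (hcont n).integrableOn_Ioc
  have habs : ∀ t : ℝ, 0 ≤ t → t ≤ 1 → |(-(27/16):ℝ)*(t*(1-t)^2)| ≤ 1/4 := by
    intro t h0 h1
    rw [abs_mul, show |(-(27/16):ℝ)| = 27/16 by rw [abs_of_nonpos (by norm_num)]; norm_num,
      abs_of_nonneg (by positivity : (0:ℝ) ≤ t*(1-t)^2)]
    nlinarith [mul_nonneg (sq_nonneg (3*t-1)) (by linarith : (0:ℝ) ≤ 4-3*t)]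
  have hfnt : ∀ n, ∀ t : ℝ, f n t = (3*(n:ℝ)+4) * ((-(27/16):ℝ)*(t*(1-t)^2))^(n+1) := by
    intro n t
    show (3*(n:ℝ)+4) * (-(27/16):ℝ)^(n+1) * (t^(n+1)*(1-t)^(2*n+2)) = _
    rw [mul_pow, mul_pow, ← pow_mul, show 2*(n+1)=2*n+2 from by ring]
    ring
  have hbound : ∀ n, ∀ t ∈ Set.Ioc (0:ℝ) 1, ‖f n t‖ ≤ (3*(n:ℝ)+4) * (1/4)^(n+1) := by
    intro n t ht
    rw [Real.norm_eq_abs, hfnt n t, abs_mul, abs_of_nonneg (by positivity : (0:ℝ) ≤ 3*(n:ℝ)+4),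
      abs_pow]
    have := habs t ht.1.le ht.2
    exact mul_le_mul_of_nonneg_left (pow_le_pow_left₀ (abs_nonneg _) this _) (by positivity)
  have hsummable : Summable (fun n : ℕ => (3*(n:ℝ)+4) * (1/4)^(n+1)) := by
    have h4 : ‖(1/4 : ℝ)‖ < 1 := by
      rw [Real.norm_eq_abs, abs_of_pos (by norm_num : (0:ℝ) < 1/4)]
      norm_num
    have A := (summable_pow_mul_geometric_of_norm_lt_one 1 h4).mul_left (3/4 : ℝ)
    have B := (summable_geometric_of_norm_lt_one h4).mul_left (1 : ℝ)
    apply (A.add B).congr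
    intro n
    push_cast
    ring
  have hnormint : ∀ n, ∫ t, ‖f n t‖ ∂μ ≤ (3*(n:ℝ)+4)*(1/4)^(n+1) := by
    intro n
    rw [hμ]
    have h1 := MeasureTheory.setIntegral_mono_on ((hint n).norm)
      (integrable_const ((3*(n:ℝ)+4)*(1/4)^(n+1))) measurableSet_Ioc (hbound n)
    rw [MeasureTheory.setIntegral_const] at h1
    simpa [Real.volume_Ioc] using h1
  have hsum2 : Summable (fun n => ∫ t, ‖f n t‖ ∂μ) :=
    Summable.of_nonneg_of_le (fun n => integral_nonneg (fun t => norm_nonneg _)) hnormint hsummable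
  have hswap := MeasureTheory.hasSum_integral_of_summable_integral_norm hint hsum2
  have hterm : (fun n => ∫ t, f n t ∂μ)
      = fun n => (-(27/16):ℝ)^(n+1) / (((3*(n+1)).choose (n+1) : ℕ) : ℝ) := by
    funext n
    rw [hμ, ← intervalIntegral.integral_of_le (by norm_num : (0:ℝ) ≤ 1)]
    exact term_int n
  rw [hterm] at hswap
  rw [hswap.tsum_eq]
  have htsum : ∀ t ∈ Set.Ioc (0:ℝ) 1, (∑' n, f n t) = Gg t := by
    intro t ht
    have h0 : 0 ≤ t := ht.1.le
    have hq : 0 < 9*t^2-21*t+16 := by nlinarith [sq_nonneg (6*t-7)]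
    have hl : (0:ℝ) < 3*t+1 := by linarith
    have hD : 0 < 27*t^3-54*t^2+27*t+16 := by nlinarith [mul_pos hl hq]
    have hu : |(-(27/16):ℝ)*(t*(1-t)^2)| < 1 :=
      lt_of_le_of_lt (habs t h0 ht.2) (by norm_num)
    have hS := sum34 hu
    have : (fun n : ℕ => (3*(n:ℝ)+4) * ((-(27/16):ℝ)*(t*(1-t)^2))^(n+1)) = fun n => f n t :=
      funext fun n => (hfnt n t).symm
    rw [this] at hS
    rw [hS.tsum_eq]
    show _ = Gg t
    unfold Gg
    have hune : (1:ℝ) - (-(27/16)*(t*(1-t)^2)) ≠ 0 := by nlinarith [habs t h0 ht.2, abs_lt.mp hu]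
    rw [show 27*t^3-54*t^2+27*t+16 = (3*t+1)*(9*t^2-21*t+16) by ring]
    have hl' := hl.ne'
    have hq' := hq.ne'
    rw [show (1:ℝ) - (-(27/16)*(t*(1-t)^2)) = (3*t+1)*(9*t^2-21*t+16)/16 by ring]
    have hq2 : t*(t*9-21)+16 ≠ 0 := by intro h; apply hq'; linear_combination h
    have hl2 : t*3+1 ≠ 0 := by intro h; apply hl'; linear_combination h
    field_simp
    ring
  have hcongr : ∫ t, (∑' n, f n t) ∂μ = ∫ t, Gg t ∂μ := by
    rw [hμ]
    exact MeasureTheory.setIntegral_congr_fun measurableSet_Ioc htsum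
  rw [hcongr, hμ, ← intervalIntegral.integral_of_le (by norm_num : (0:ℝ) ≤ 1)]
  have hGG : ∫ t in (0:ℝ)..1, Gg t = Fa 1 - Fa 0 := by
    apply intervalIntegral.integral_eq_sub_of_hasDerivAt
    · intro t ht
      rw [Set.uIcc_of_le (by norm_num : (0:ℝ) ≤ 1)] at ht
      exact hasDeriv_Fa ht.1
    · apply ContinuousOn.intervalIntegrable
      rw [Set.uIcc_of_le (by norm_num : (0:ℝ) ≤ 1)]
      exact GgContOn
  rw [hGG, eval_Fa]
end
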